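/- For every prime p ≥ 5, the set of positive integers n for which C̄_{p,1}(n) is odd is infinite. -/
import Mathlib

/-- Andrews' singular overpartition function `C̄_{k,i}(n)`: the number of pairs `(λ, S)`
where `λ` is a partition of `n` with no part divisible by `k` and `S` is a set of
part-values of `λ`, each congruent to `i` or `-i` modulo `k`. -/
noncomputable def singularOverpartition (k i n : ℕ) : ℕ :=
  Nat.card {P : n.Partition × Finset ℕ //
    (∀ j ∈ P.1.parts, ¬ k ∣ j) ∧
    P.2 ⊆ P.1.parts.toFinset ∧
    ∀ x ∈ P.2, (x : ZMod k) = (i : ZMod k) ∨ (x : ZMod k) = -(i : ZMod k)}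

open Finset

def chiA (p j : ℕ) : Prop := (j : ZMod p) ≠ 0 ∧ (j : ZMod p) ≠ 1 ∧ (j : ZMod p) ≠ -1

instance (p : ℕ) : DecidablePred (chiA p) := fun _ => by unfold chiA; infer_instance

def Pc (p n : ℕ) : Finset (Nat.Partition n) :=
  univ.filter fun L => ∀ j ∈ L.parts, chiA p j

def bA (p n : ℕ) : ℕ := (Pc p n).card

def good (p : ℕ) {n : ℕ} (L : n.Partition) : Finset ℕ :=
  L.parts.toFinset.filter (fun x => (x : ZMod p) = 1 ∨ (x : ZMod p) = -1)

lemma sop_card (p : ℕ) [NeZero p] (n : ℕ) :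
    singularOverpartition p 1 n =
      ∑ L : {L : n.Partition // ∀ j ∈ L.parts, ¬ p ∣ j}, 2 ^ (good p L.1).card := by
  have e : {P : n.Partition × Finset ℕ //
      (∀ j ∈ P.1.parts, ¬ p ∣ j) ∧
      P.2 ⊆ P.1.parts.toFinset ∧
      ∀ x ∈ P.2, (x : ZMod p) = ((1:ℕ) : ZMod p) ∨ (x : ZMod p) = -((1:ℕ) : ZMod p)} ≃
      (Σ L : {L : n.Partition // ∀ j ∈ L.parts, ¬ p ∣ j}, ↥((good p L.1).powerset)) := by
    refine ⟨fun P => ⟨⟨P.1.1, P.2.1⟩, ⟨P.1.2, ?_⟩⟩, fun L => ⟨⟨L.1.1, L.2.1⟩, ⟨L.1.2, ?_, ?_⟩⟩, ?_, ?_⟩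
    · rw [Finset.mem_powerset]
      intro x hx
      rw [good, Finset.mem_filter]
      exact ⟨P.2.2.1 hx, by simpa using P.2.2.2 x hx⟩
    · intro x hx
      have := Finset.mem_powerset.mp L.2.2 hx
      rw [good, Finset.mem_filter] at this
      exact this.1
    · intro x hx
      have := Finset.mem_powerset.mp L.2.2 hx
      rw [good, Finset.mem_filter] at this
      simpa using this.2
    · intro P; rfl
    · intro L; rfl
  rw [singularOverpartition, Nat.card_congr e, Nat.card_eq_fintype_card,
    Fintype.card_sigma]
  congr 1
  ext L
  rw [Fintype.card_coe, Finset.card_powerset]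

lemma odd_sum_pow {α : Type*} [Fintype α] (g : α → ℕ) :
    Odd (∑ x : α, 2 ^ g x) ↔ Odd (univ.filter fun x => g x = 0).card := by
  classical
  rw [← Finset.sum_filter_add_sum_filter_not univ (fun x => g x = 0)]
  have h1 : ∑ x ∈ univ.filter (fun x => g x = 0), 2 ^ g x
      = (univ.filter fun x => g x = 0).card := by
    rw [Finset.card_eq_sum_ones]
    exact Finset.sum_congr rfl fun x hx => by
      rw [(Finset.mem_filter.mp hx).2]; rfl
  have h2 : 2 ∣ ∑ x ∈ univ.filter (fun x => ¬ g x = 0), 2 ^ g x :=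
    Finset.dvd_sum fun x hx => dvd_pow_self 2 (Finset.mem_filter.mp hx).2
  obtain ⟨c, hc⟩ := h2
  rw [h1, hc, Nat.odd_iff, Nat.odd_iff]
  omega

lemma sop_parity {p : ℕ} (hp : 1 < p) (n : ℕ) :
    (Odd (singularOverpartition p 1 n) ↔ Odd (bA p n)) := by
  haveI : NeZero p := ⟨by omega⟩
  rw [sop_card p n, odd_sum_pow]
  congr! 1
  rw [bA]
  apply Finset.card_bij (fun L _ => L.val)
  · intro L hL
    rw [Finset.mem_filter] at hL
    have hg : good p L.val = ∅ := Finset.card_eq_zero.mp hL.2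
    rw [good, Finset.filter_eq_empty_iff] at hg
    rw [Pc, Finset.mem_filter]
    refine ⟨Finset.mem_univ _, fun j hj => ?_⟩
    have h0 : ((j:ℕ) : ZMod p) ≠ 0 :=
      fun h => L.2 j hj ((ZMod.natCast_eq_zero_iff j p).mp h)
    have := hg (Multiset.mem_toFinset.mpr hj)
    push_neg at this
    exact ⟨h0, this.1, this.2⟩
  · intro a _ b _ h
    exact Subtype.ext h
  · intro L hL
    rw [Pc, Finset.mem_filter] at hL
    refine ⟨⟨L, fun j hj => ?_⟩, ?_, rfl⟩
    · have := (hL.2 j hj).1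
      rw [ne_eq, ZMod.natCast_eq_zero_iff] at this
      exact this
    · rw [Finset.mem_filter]
      refine ⟨Finset.mem_univ _, ?_⟩
      rw [Finset.card_eq_zero, good, Finset.filter_eq_empty_iff]
      intro x hx
      have := hL.2 x (Multiset.mem_toFinset.mp hx)
      push_neg
      exact ⟨this.2.1, this.2.2⟩

def sigA (p m : ℕ) : ℕ := ∑ a ∈ m.divisors.filter (chiA p), a

lemma chiA_pos {p j : ℕ} (h : chiA p j) : 0 < j := by
  rcases Nat.eq_zero_or_pos j with rfl | h'
  · exact absurd (by simp) h.1
  · exact h'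

lemma bA_zero (p : ℕ) : bA p 0 = 1 := by
  rw [bA, Pc]
  rw [Finset.filter_true_of_mem (fun L _ => by simp)]
  simp

lemma mem_Pc {p n : ℕ} {L : Nat.Partition n} : L ∈ Pc p n ↔ ∀ j ∈ L.parts, chiA p j := by
  rw [Pc, Finset.mem_filter]; simp

lemma card_filter_count (p : ℕ) {n a k : ℕ} (ha : chiA p a) (hk : 1 ≤ k) (hak : a * k ≤ n) :
    ((Pc p n).filter fun L => k ≤ L.parts.count a).card = bA p (n - a * k) := by
  have hrep : ∀ L : Nat.Partition n, L ∈ (Pc p n).filter (fun L => k ≤ L.parts.count a) →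
      Multiset.replicate k a ≤ L.parts := fun L hL =>
    Multiset.le_count_iff_replicate_le.mp (Finset.mem_filter.mp hL).2
  refine Finset.card_bij'
    (i := fun L hL => (⟨L.parts - Multiset.replicate k a,
      fun {i} hi => L.parts_pos (Multiset.mem_of_le (Multiset.sub_le_self _ _) hi),
      by
        have h1 := tsub_add_cancel_of_le (hrep L hL)
        have h2 := congrArg Multiset.sum h1
        rw [Multiset.sum_add, Multiset.sum_replicate, smul_eq_mul, L.parts_sum] at h2
        have h3 : k * a = a * k := Nat.mul_comm k a
        omega⟩ : Nat.Partition (n - a * k)))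
    (j := fun M hM => (⟨M.parts + Multiset.replicate k a,
      fun {i} hi => by
        rcases Multiset.mem_add.mp hi with h | h
        · exact M.parts_pos h
        · rw [Multiset.eq_of_mem_replicate h]; exact chiA_pos ha,
      by
        rw [Multiset.sum_add, Multiset.sum_replicate, smul_eq_mul, M.parts_sum]
        have h3 : k * a = a * k := Nat.mul_comm k a
        omega⟩ : Nat.Partition n)) ?_ ?_ ?_ ?_
  · intro L hL
    rw [mem_Pc]
    intro j hj
    exact (mem_Pc.mp (Finset.mem_filter.mp hL).1) j
      (Multiset.mem_of_le (Multiset.sub_le_self _ _) hj)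
  · intro M hM
    rw [Finset.mem_filter, mem_Pc]
    refine ⟨fun j hj => ?_, ?_⟩
    · rcases Multiset.mem_add.mp hj with h | h
      · exact mem_Pc.mp hM j h
      · rw [Multiset.eq_of_mem_replicate h]; exact ha
    · rw [Multiset.count_add, Multiset.count_replicate, if_pos rfl]
      omega
  · intro L hL
    apply Nat.Partition.ext
    simp only
    exact tsub_add_cancel_of_le (hrep L hL)
  · intro M hM
    apply Nat.Partition.ext
    simp only
    exact add_tsub_cancel_right _ _

lemma count_le_n {n : ℕ} (L : Nat.Partition n) (a : ℕ) : L.parts.count a ≤ n := by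
  calc L.parts.count a ≤ Multiset.card L.parts := Multiset.count_le_card _ _
    _ = Multiset.card L.parts • 1 := by simp
    _ ≤ L.parts.sum := Multiset.card_nsmul_le_sum (fun x hx => L.parts_pos hx)
    _ = n := L.parts_sum

lemma sum_count (p : ℕ) {n a : ℕ} (ha : chiA p a) :
    ∑ L ∈ Pc p n, L.parts.count a
      = ∑ k ∈ Icc 1 n, if a * k ≤ n then bA p (n - a * k) else 0 := by
  have h1 : ∀ L ∈ Pc p n, L.parts.count a
      = ∑ k ∈ Icc 1 n, if k ≤ L.parts.count a then 1 else 0 := by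
    intro L _
    rw [← Finset.card_filter]
    have : (Icc 1 n).filter (fun k => k ≤ L.parts.count a) = Icc 1 (L.parts.count a) := by
      ext k
      simp only [Finset.mem_filter, Finset.mem_Icc]
      have := count_le_n L a
      omega
    rw [this, Nat.card_Icc]
    omega
  rw [Finset.sum_congr rfl h1, Finset.sum_comm]
  apply Finset.sum_congr rfl
  intro k hk
  rw [Finset.mem_Icc] at hk
  split_ifs with han
  · rw [← card_filter_count p ha hk.1 han, Finset.card_filter]
  · apply Finset.sum_eq_zero
    intro L _
    rw [if_neg]
    intro hc
    have hrep := Multiset.le_count_iff_replicate_le.mp hc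
    have h2 := tsub_add_cancel_of_le hrep
    have h3 := congrArg Multiset.sum h2
    rw [Multiset.sum_add, Multiset.sum_replicate, smul_eq_mul, L.parts_sum] at h3
    have h4 : k * a = a * k := Nat.mul_comm k a
    omega

lemma key (p n : ℕ) : n * bA p n = ∑ m ∈ Icc 1 n, sigA p m * bA p (n - m) := by
  -- LHS = sum over partitions of sum of parts
  have lhs1 : n * bA p n = ∑ L ∈ Pc p n, L.parts.sum := by
    rw [bA, Finset.card_eq_sum_ones, Finset.mul_sum]
    exact Finset.sum_congr rfl fun L _ => by rw [L.parts_sum, mul_one]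
  have lhs2 : ∀ L : Nat.Partition n, L ∈ Pc p n →
      L.parts.sum = ∑ x ∈ Icc 1 n, L.parts.count x * x := by
    intro L _
    have hmap : L.parts.sum = (L.parts.map id).sum := by rw [Multiset.map_id]
    rw [hmap, Finset.sum_multiset_map_count]
    simp only [smul_eq_mul, id]
    apply Finset.sum_subset
    · intro x hx
      rw [Multiset.mem_toFinset] at hx
      rw [Finset.mem_Icc]
      exact ⟨L.parts_pos hx, (Multiset.le_sum_of_mem hx).trans_eq L.parts_sum⟩
    · intro x _ hx
      rw [Multiset.mem_toFinset] at hx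
      rw [Multiset.count_eq_zero_of_notMem hx, zero_mul]
  have lhs3 : n * bA p n
      = ∑ x ∈ Icc 1 n, ∑ k ∈ Icc 1 n,
          if chiA p x ∧ x * k ≤ n then x * bA p (n - x * k) else 0 := by
    rw [lhs1, Finset.sum_congr rfl lhs2, Finset.sum_comm]
    apply Finset.sum_congr rfl
    intro x _
    by_cases hx : chiA p x
    · rw [← Finset.sum_mul, sum_count p hx, Finset.sum_mul]
      apply Finset.sum_congr rfl
      intro k _
      rw [ite_mul, zero_mul]
      by_cases h : x * k ≤ n
      · rw [if_pos h, if_pos ⟨hx, h⟩, mul_comm]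
      · rw [if_neg h, if_neg (by tauto)]
    · have hz : ∀ L ∈ Pc p n, L.parts.count x * x = 0 := by
        intro L hL
        rw [Multiset.count_eq_zero_of_notMem, zero_mul]
        intro hmem
        exact hx (mem_Pc.mp hL x hmem)
      rw [Finset.sum_congr rfl hz, Finset.sum_const_zero]
      symm
      apply Finset.sum_eq_zero
      intro k _
      rw [if_neg (by tauto)]
  -- RHS into double-ite form
  have rhs1 : ∑ m ∈ Icc 1 n, sigA p m * bA p (n - m)
      = ∑ m ∈ Icc 1 n, ∑ a ∈ Icc 1 n,
          if a ∣ m ∧ chiA p a then a * bA p (n - m) else 0 := by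
    apply Finset.sum_congr rfl
    intro m hm
    rw [Finset.mem_Icc] at hm
    rw [sigA, Finset.sum_mul]
    rw [← Finset.sum_filter]
    apply Finset.sum_congr
    · ext a
      simp only [Finset.mem_filter, Nat.mem_divisors, Finset.mem_Icc]
      constructor
      · rintro ⟨⟨hd, _⟩, hc⟩
        exact ⟨⟨Nat.pos_of_dvd_of_pos hd (by omega), (Nat.le_of_dvd (by omega) hd).trans hm.2⟩,
          hd, hc⟩
      · rintro ⟨_, hd, hc⟩
        exact ⟨⟨hd, by omega⟩, hc⟩
    · intros; rfl
  rw [lhs3, rhs1]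
  conv_rhs => rw [Finset.sum_comm]
  apply Finset.sum_congr rfl
  intro x hx
  rw [Finset.mem_Icc] at hx
  by_cases hchi : chiA p x
  · trans ∑ k ∈ Icc 1 n, if x * k ≤ n then x * bA p (n - x * k) else 0
    · apply Finset.sum_congr rfl
      intro k _
      by_cases h : x * k ≤ n
      · rw [if_pos ⟨hchi, h⟩, if_pos h]
      · rw [if_neg (by tauto), if_neg h]
    trans ∑ m ∈ Icc 1 n, if x ∣ m then x * bA p (n - m) else 0
    · rw [← Finset.sum_filter (fun k => x * k ≤ n) (fun k => x * bA p (n - x * k)),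
        ← Finset.sum_filter (fun m => x ∣ m) (fun m => x * bA p (n - m))]
      apply Finset.sum_nbij' (i := fun k => x * k) (j := fun m => m / x)
      · intro k hk
        simp only [Finset.mem_filter, Finset.mem_Icc] at hk ⊢
        obtain ⟨⟨h1, h2⟩, hle⟩ := hk
        exact ⟨⟨Nat.mul_pos (by omega) (by omega), hle⟩, dvd_mul_right x k⟩
      · intro m hm
        simp only [Finset.mem_filter, Finset.mem_Icc] at hm ⊢
        obtain ⟨⟨h1, h2⟩, hd⟩ := hm
        refine ⟨⟨Nat.div_pos (Nat.le_of_dvd (by omega) hd) (by omega),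
          (Nat.div_le_self m x).trans h2⟩, ?_⟩
        rw [Nat.mul_div_cancel' hd]; exact h2
      · intro k hk
        exact Nat.mul_div_cancel_left k (by omega)
      · intro m hm
        simp only [Finset.mem_filter] at hm
        exact Nat.mul_div_cancel' hm.2
      · intro k hk
        rfl
    · apply Finset.sum_congr rfl
      intro m _
      by_cases h : x ∣ m
      · rw [if_pos h, if_pos ⟨h, hchi⟩]
      · rw [if_neg h, if_neg (by tauto)]
  · rw [Finset.sum_eq_zero, Finset.sum_eq_zero]
    · intro m _; rw [if_neg (by tauto)]
    · intro k _; rw [if_neg (by tauto)]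

lemma cast_even {m : ℕ} (h : ¬ Odd m) : ((m : ℕ) : ZMod 2) = 0 := by
  rw [Nat.not_odd_iff_even] at h
  obtain ⟨c, hc⟩ := h
  rw [ZMod.natCast_eq_zero_iff]
  omega

lemma cast_odd {m : ℕ} (h : Odd m) : ((m : ℕ) : ZMod 2) = 1 := by
  have : m ≡ 1 [MOD 2] := by
    rw [Nat.odd_iff] at h
    show m % 2 = 1 % 2
    omega
  have := (ZMod.natCast_eq_natCast_iff _ _ _).mpr this
  simpa using this

lemma recur {p N : ℕ} (hN : 1 ≤ N) (hb : ∀ m, N < m → ¬ Odd (bA p m)) :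
    ∀ n, N < n → ((sigA p n : ℕ) : ZMod 2)
      = ∑ j ∈ Icc 1 N, ((bA p j : ℕ) : ZMod 2) * ((sigA p (n - j) : ℕ) : ZMod 2) := by
  intro n hn
  have hkey := congrArg (fun t : ℕ => (t : ZMod 2)) (key p n)
  simp only [Nat.cast_mul, Nat.cast_sum] at hkey
  rw [cast_even (hb n hn), mul_zero] at hkey
  -- restrict the sum
  have hsub : Icc (n - N) n ⊆ Icc 1 n := by
    intro m hm; rw [Finset.mem_Icc] at hm ⊢; omega
  have hvan : ∀ m ∈ Icc 1 n, m ∉ Icc (n - N) n →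
      ((sigA p m : ℕ) : ZMod 2) * ((bA p (n - m) : ℕ) : ZMod 2) = 0 := by
    intro m hm hm'
    rw [Finset.mem_Icc] at hm
    rw [Finset.mem_Icc] at hm'
    have : N < n - m := by omega
    rw [cast_even (hb _ this), mul_zero]
  rw [← Finset.sum_subset hsub hvan] at hkey
  -- reindex j = n - m
  have hre : ∑ m ∈ Icc (n - N) n, ((sigA p m : ℕ) : ZMod 2) * ((bA p (n - m) : ℕ) : ZMod 2)
      = ∑ j ∈ Icc 0 N, ((sigA p (n - j) : ℕ) : ZMod 2) * ((bA p j : ℕ) : ZMod 2) := by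
    apply Finset.sum_nbij' (i := fun m => n - m) (j := fun j => n - j)
    · intro m hm; rw [Finset.mem_Icc] at hm ⊢; omega
    · intro j hj; rw [Finset.mem_Icc] at hj ⊢; omega
    · intro m hm; rw [Finset.mem_Icc] at hm; omega
    · intro j hj; rw [Finset.mem_Icc] at hj; omega
    · intro m hm
      rw [Finset.mem_Icc] at hm
      have h1 : n - (n - m) = m := by omega
      rw [h1]
  rw [hre] at hkey
  have h0 : (0 : ℕ) ∉ Icc 1 N := by simp
  rw [show Icc 0 N = insert 0 (Icc 1 N) by ext x; simp [Finset.mem_Icc, Finset.mem_insert]; omega,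
    Finset.sum_insert h0] at hkey
  rw [Nat.sub_zero, bA_zero, Nat.cast_one, mul_one] at hkey
  have flip : ∀ x y : ZMod 2, 0 = x + y → x = y := by decide
  have := flip _ _ hkey
  rw [this]
  apply Finset.sum_congr rfl
  intro j _
  rw [mul_comm]

lemma eventually_periodic {N : ℕ} (hN : 1 ≤ N) (r : ℕ → ZMod 2) (c : ℕ → ZMod 2)
    (hr : ∀ n, N < n → r n = ∑ j ∈ Icc 1 N, c j * r (n - j)) :
    ∃ T, 1 ≤ T ∧ ∃ M, ∀ m, M ≤ m → r (m + T) = r m := by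
  have main : ∀ a b : ℕ, a < b →
      (∀ i : Fin N, r (N + 1 + a + i) = r (N + 1 + b + i)) →
      ∃ T, 1 ≤ T ∧ ∃ M, ∀ m, M ≤ m → r (m + T) = r m := by
    intro a b hab hw
    refine ⟨b - a, by omega, N + 1 + a, ?_⟩
    have claim : ∀ d, r (N + 1 + a + d) = r (N + 1 + b + d) := by
      intro d
      induction d using Nat.strong_induction_on with
      | _ d ih =>
        rcases Nat.lt_or_ge d N with hd | hd
        · exact hw ⟨d, hd⟩
        · have h1 : N < N + 1 + a + d := by omega
          have h2 : N < N + 1 + b + d := by omega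
          rw [hr _ h1, hr _ h2]
          apply Finset.sum_congr rfl
          intro j hj
          rw [Finset.mem_Icc] at hj
          have e1 : N + 1 + a + d - j = N + 1 + a + (d - j) := by omega
          have e2 : N + 1 + b + d - j = N + 1 + b + (d - j) := by omega
          rw [e1, e2, ih (d - j) (by omega)]
    intro m hm
    have e3 : m + (b - a) = N + 1 + b + (m - (N + 1 + a)) := by omega
    have e4 : m = N + 1 + a + (m - (N + 1 + a)) := by omega
    rw [e3]
    conv_rhs => rw [e4]
    exact (claim _).symm
  have hfin : ¬ Function.Injective (fun t : ℕ => (fun i : Fin N => r (N + 1 + t + i))) :=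
    not_injective_infinite_finite _
  rw [Function.not_injective_iff] at hfin
  obtain ⟨a, b, hw, hab⟩ := hfin
  rcases Nat.lt_or_ge a b with h | h
  · exact main a b h (fun i => congrFun hw i)
  · exact main b a (by omega) (fun i => (congrFun hw i).symm)

lemma chiA_of_modeq_two {p j : ℕ} (hp : p.Prime) (hp5 : 5 ≤ p) (h : j ≡ 2 [MOD p]) :
    chiA p j := by
  haveI : NeZero p := ⟨by omega⟩
  have hj2 : (j : ZMod p) = ((2 : ℕ) : ZMod p) := (ZMod.natCast_eq_natCast_iff _ _ _).mpr h
  refine ⟨?_, ?_, ?_⟩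
  · rw [hj2]
    intro h0
    have := (ZMod.natCast_eq_zero_iff 2 p).mp h0
    have := Nat.le_of_dvd (by norm_num) this
    omega
  · rw [hj2]
    intro h1
    rw [show (1 : ZMod p) = ((1:ℕ) : ZMod p) by simp] at h1
    have := (ZMod.natCast_eq_natCast_iff _ _ _).mp h1
    have := (Nat.modEq_iff_dvd' (by norm_num)).mp this.symm
    have := Nat.le_of_dvd (by norm_num) this
    omega
  · rw [hj2]
    intro h1
    have h3 : ((3 : ℕ) : ZMod p) = 0 := by
      have e : ((3:ℕ) : ZMod p) = ((2:ℕ) : ZMod p) + 1 := by push_cast; ring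
      rw [e, h1]; ring
    have := (ZMod.natCast_eq_zero_iff 3 p).mp h3
    have := Nat.le_of_dvd (by norm_num) this
    omega

lemma not_chiA_of_modeq_one {p j : ℕ} (hp : 1 < p) (h : j ≡ 1 [MOD p]) :
    ¬ chiA p j := by
  haveI : NeZero p := ⟨by omega⟩
  intro hc
  apply hc.2.1
  have := (ZMod.natCast_eq_natCast_iff j 1 p).mpr h
  simpa using this

lemma sigA_prime {p q : ℕ} (hq : q.Prime) (hp : 1 < p) :
    sigA p q = if chiA p q then q else 0 := by
  haveI : NeZero p := ⟨by omega⟩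
  rw [sigA, hq.divisors]
  have h1 : ¬ chiA p 1 := not_chiA_of_modeq_one hp rfl
  rw [show ({1, q} : Finset ℕ) = insert 1 {q} from rfl, Finset.filter_insert, if_neg h1,
    Finset.filter_singleton]
  split_ifs with h
  · exact Finset.sum_singleton _ _
  · rfl

lemma divisors_semiprime {a b : ℕ} (ha : a.Prime) (hb : b.Prime) :
    (a * b).divisors = {1, a, b, a * b} := by
  rw [Nat.divisors_mul, ha.divisors, hb.divisors]
  ext d
  simp only [Finset.mem_mul, Finset.mem_insert, Finset.mem_singleton]
  constructor
  · rintro ⟨x, hx, y, hy, rfl⟩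
    rcases hx with rfl | rfl <;> rcases hy with rfl | rfl <;> simp
  · rintro (rfl | rfl | rfl | rfl)
    · exact ⟨1, Or.inl rfl, 1, Or.inl rfl, one_mul 1⟩
    · exact ⟨_, Or.inr rfl, 1, Or.inl rfl, mul_one _⟩
    · exact ⟨1, Or.inl rfl, _, Or.inr rfl, one_mul _⟩
    · exact ⟨_, Or.inr rfl, _, Or.inr rfl, rfl⟩

lemma sigA_semiprime {p q1 q2 : ℕ} (hp : p.Prime) (hp5 : 5 ≤ p)
    (h1 : q1.Prime) (h2 : q2.Prime) (hlt : q1 < q2)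
    (hm1 : q1 ≡ 1 [MOD p]) (hm2 : q2 ≡ 2 [MOD p]) :
    sigA p (q1 * q2) = q2 + q1 * q2 := by
  rw [sigA, divisors_semiprime h1 h2]
  have hc1 : ¬ chiA p 1 := not_chiA_of_modeq_one hp.one_lt rfl
  have hcq1 : ¬ chiA p q1 := not_chiA_of_modeq_one hp.one_lt hm1
  have hcq2 : chiA p q2 := chiA_of_modeq_two hp hp5 hm2
  have hcq12 : chiA p (q1 * q2) := chiA_of_modeq_two hp hp5 (by
    have := Nat.ModEq.mul hm1 hm2
    simpa using this)
  rw [show ({1, q1, q2, q1 * q2} : Finset ℕ)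
      = insert 1 (insert q1 (insert q2 {q1 * q2})) from rfl]
  rw [Finset.filter_insert, if_neg hc1, Finset.filter_insert, if_neg hcq1,
    Finset.filter_insert, if_pos hcq2, Finset.filter_singleton, if_pos hcq12]
  have hne : q2 ∉ ({q1 * q2} : Finset ℕ) := by
    rw [Finset.mem_singleton]
    have := h1.two_le
    have := h2.pos
    nlinarith
  rw [Finset.sum_insert hne, Finset.sum_singleton]

lemma no_period {p : ℕ} (hp : p.Prime) (hp5 : 5 ≤ p) {T M : ℕ} (hT : 1 ≤ T)
    (hper : ∀ m, M ≤ m → ((sigA p (m + T) : ℕ) : ZMod 2) = ((sigA p m : ℕ) : ZMod 2)) :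
    False := by
  haveI : Fact p.Prime := ⟨hp⟩
  haveI : NeZero p := ⟨by omega⟩
  set D := p * T with hD
  have hDpos : 0 < D := Nat.mul_pos (by omega) (by omega)
  haveI : NeZero D := ⟨by omega⟩
  -- iterate the period
  have hiter : ∀ m, M ≤ m → ∀ k, ((sigA p (m + k * T) : ℕ) : ZMod 2) = ((sigA p m : ℕ) : ZMod 2) := by
    intro m hm k
    induction k with
    | zero => simp
    | succ k ih =>
      have e : m + (k + 1) * T = (m + k * T) + T := by ring
      rw [e, hper (m + k * T) (by omega), ih]
  -- pick q ≡ 2 mod p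
  have hu2 : IsUnit (((2:ℕ) : ZMod p)) := by
    rw [isUnit_iff_ne_zero]
    intro h0
    have := Nat.le_of_dvd (by norm_num) ((ZMod.natCast_eq_zero_iff 2 p).mp h0)
    omega
  obtain ⟨q, hqB, hq, hq2⟩ := Nat.forall_exists_prime_gt_and_eq_mod hu2 (M + D + 5)
  have hq2' : q ≡ 2 [MOD p] := (ZMod.natCast_eq_natCast_iff _ _ _).mp hq2
  have hqu : IsUnit ((q : ℕ) : ZMod D) := by
    rw [ZMod.isUnit_iff_coprime]
    exact (hq.coprime_iff_not_dvd).mpr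
      (fun hdvd => by have := Nat.le_of_dvd hDpos hdvd; omega)
  have hu1 : IsUnit (((1:ℕ) : ZMod D)) := by simpa using isUnit_one
  obtain ⟨q1, hq1B, hq1, hq1c⟩ := Nat.forall_exists_prime_gt_and_eq_mod hu1 q
  obtain ⟨q2, hq2B, hq2p, hq2c⟩ := Nat.forall_exists_prime_gt_and_eq_mod hqu q1
  have mq1D : q1 ≡ 1 [MOD D] := (ZMod.natCast_eq_natCast_iff _ _ _).mp hq1c
  have mq2D : q2 ≡ q [MOD D] := (ZMod.natCast_eq_natCast_iff _ _ _).mp hq2c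
  have hpD : p ∣ D := dvd_mul_right p T
  have hTD : T ∣ D := dvd_mul_left T p
  have mq1p : q1 ≡ 1 [MOD p] := mq1D.of_dvd hpD
  have mq2p : q2 ≡ 2 [MOD p] := (mq2D.of_dvd hpD).trans hq2'
  have mq1T : q1 ≡ 1 [MOD T] := mq1D.of_dvd hTD
  have mq2T : q2 ≡ q [MOD T] := mq2D.of_dvd hTD
  -- values of r
  have hoddq : Odd q := hq.odd_of_ne_two (by omega)
  have hoddq1 : Odd q1 := hq1.odd_of_ne_two (by omega)
  have hoddq2 : Odd q2 := hq2p.odd_of_ne_two (by omega)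
  have rq : ((sigA p q : ℕ) : ZMod 2) = 1 := by
    rw [sigA_prime hq hp.one_lt, if_pos (chiA_of_modeq_two hp hp5 hq2')]
    exact cast_odd hoddq
  have rqq : ((sigA p (q1 * q2) : ℕ) : ZMod 2) = 0 := by
    have hs := sigA_semiprime hp hp5 hq1 hq2p hq2B mq1p mq2p
    rw [hs]
    push_cast
    rw [cast_odd hoddq1, cast_odd hoddq2]
    ring_nf
    decide
  -- q1 * q2 ≡ q mod T and both are ≥ M
  have hcong : q ≡ q1 * q2 [MOD T] := by
    have h := mq1T.mul mq2T
    rw [one_mul] at h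
    exact h.symm
  have hle : q ≤ q1 * q2 :=
    le_trans (by omega : q ≤ q2) (Nat.le_mul_of_pos_left q2 hq1.pos)
  obtain ⟨k, hk⟩ := (Nat.modEq_iff_dvd' hle).mp hcong
  have h1 : q + T * k = q1 * q2 := by
    rw [← hk]
    exact Nat.add_sub_cancel' hle
  have h2 := hiter q (by omega) k
  rw [mul_comm k T, h1, rqq, rq] at h2
  exact absurd h2 (by decide)

theorem stmt_4 (p : ℕ) (hp : p.Prime) (hp5 : 5 ≤ p) :
    {n : ℕ | 0 < n ∧ Odd (singularOverpartition p 1 n)}.Infinite := by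
  haveI : NeZero p := ⟨by omega⟩
  by_contra hfin
  rw [Set.not_infinite] at hfin
  set N := max (hfin.toFinset.sup id) 1 with hN
  have hN1 : 1 ≤ N := le_max_right _ _
  have hb : ∀ m, N < m → ¬ Odd (bA p m) := by
    intro m hm hodd
    have h0 : 0 < m := by omega
    have hoddS : Odd (singularOverpartition p 1 m) := (sop_parity hp.one_lt m).mpr hodd
    have hmem : m ∈ hfin.toFinset := by
      rw [Set.Finite.mem_toFinset]; exact ⟨h0, hoddS⟩
    have := Finset.le_sup (f := id) hmem
    simp only [id] at this
    omega
  have hrec := recur hN1 hb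
  obtain ⟨T, hT, M, hper⟩ := eventually_periodic hN1 (fun n => ((sigA p n : ℕ) : ZMod 2))
    (fun j => ((bA p j : ℕ) : ZMod 2)) hrec
  exact no_period hp hp5 hT (fun m hm => hper m hm)
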